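/- arXiv:2205.00218 — 6 statements merged into one kernel-verified Lean document; each statement's English description precedes it below -/
import Mathlib

section
/- Let A ∈ ℝ^{n×n} be skew-symmetric and (C_i, A) a pair with observability matrix 𝒪_i of rank n - ν_i. Let D_i have orthonormal columns spanning im(𝒪_iᵀ) and U_i have orthonormal columns spanning ker(𝒪_i), and set T_i = [D_i U_i]. Then T_i is orthogonal, T_iᵀ A T_i is block diagonal, i.e., T_iᵀAT_i = diag(A_{io}, A_{iō}) with A_{io} ∈ ℝ^{(n-ν_i)×(n-ν_i)} and A_{iō} ∈ ℝ^{ν_i×ν_i}, and C_i T_i = [C_{io} 0]. -/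
open Matrix

/-- The observability matrix `𝒪 = col(C, CA, …, CA^{n-1})` of a pair `(C, A)`. -/
def obsMat {n m : ℕ} (C : Matrix (Fin m) (Fin n) ℝ) (A : Matrix (Fin n) (Fin n) ℝ) :
    Matrix (Fin n × Fin m) (Fin n) ℝ :=
  Matrix.of fun p j => (C * A ^ (p.1 : ℕ)) p.2 j

section aux

variable {n m : ℕ} {C : Matrix (Fin m) (Fin n) ℝ} {A : Matrix (Fin n) (Fin n) ℝ}

lemma obs_mulVec_entry (x : Fin n → ℝ) (p : Fin n × Fin m) :
    ((obsMat C A).mulVec x) p = ((C * A ^ (p.1 : ℕ)).mulVec x) p.2 := rfl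

lemma sum_smul_mulVec {n m : ℕ} (s : Finset ℕ) (c : ℕ → ℝ)
    (M : ℕ → Matrix (Fin m) (Fin n) ℝ) (x : Fin n → ℝ) :
    (∑ i ∈ s, c i • M i).mulVec x = ∑ i ∈ s, c i • ((M i).mulVec x) := by
  classical
  induction s using Finset.induction_on with
  | empty => simp [Matrix.mulVec, dotProduct]
  | insert a t h ih =>
      rw [Finset.sum_insert h, Finset.sum_insert h, Matrix.add_mulVec,
        Matrix.smul_mulVec, ih]

/-- If `𝒪 x = 0` then `C A^k x = 0` for all `k`, by Cayley–Hamilton. -/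
lemma ker_obs_pow (x : Fin n → ℝ) (hx : (obsMat C A).mulVec x = 0) (k : ℕ) :
    (C * A ^ k).mulVec x = 0 := by
  have h0 : ∀ j : Fin n, (C * A ^ (j : ℕ)).mulVec x = 0 := by
    intro j
    funext i
    have := congrFun hx (j, i)
    simpa [obs_mulVec_entry] using this
  rcases Nat.eq_zero_or_pos n with hn | hn
  · funext i
    subst hn
    simp [Matrix.mulVec, dotProduct]
  · have hq : (Polynomial.X ^ k %ₘ A.charpoly).natDegree < n := by
      rcases eq_or_ne (Polynomial.X ^ k %ₘ A.charpoly) 0 with h | h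
      · simpa [h] using hn
      · have hd := Polynomial.degree_modByMonic_lt (Polynomial.X ^ k) A.charpoly_monic
        rw [Matrix.charpoly_degree_eq_dim] at hd
        have := (Polynomial.natDegree_lt_iff_degree_lt h).2 (by simpa using hd)
        simpa using this
    have hA : C * A ^ k =
        ∑ i ∈ Finset.range n, (Polynomial.X ^ k %ₘ A.charpoly).coeff i • (C * A ^ i) := by
      rw [Matrix.pow_eq_aeval_mod_charpoly A k, Polynomial.aeval_eq_sum_range' hq,
        Matrix.mul_sum]
      simp [mul_smul_comm]
    rw [hA]
    have hsum : (∑ i ∈ Finset.range n,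
        (Polynomial.X ^ k %ₘ A.charpoly).coeff i • (C * A ^ i)).mulVec x =
        ∑ i ∈ Finset.range n,
          (Polynomial.X ^ k %ₘ A.charpoly).coeff i • ((C * A ^ i).mulVec x) :=
      sum_smul_mulVec _ _ _ x
    rw [hsum]
    refine Finset.sum_eq_zero fun i hi => ?_
    rw [h0 ⟨i, Finset.mem_range.mp hi⟩, smul_zero]

/-- `ker 𝒪` is `A`-invariant. -/
lemma ker_obs_invariant (x : Fin n → ℝ) (hx : (obsMat C A).mulVec x = 0) :
    (obsMat C A).mulVec (A.mulVec x) = 0 := by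
  funext p
  rw [obs_mulVec_entry, Matrix.mulVec_mulVec]
  have : C * A ^ (p.1 : ℕ) * A = C * A ^ ((p.1 : ℕ) + 1) := by
    rw [pow_succ, ← Matrix.mul_assoc]
  rw [this, ker_obs_pow x hx]
  rfl

lemma range_dot_ker (d u : Fin n → ℝ)
    (hd : d ∈ LinearMap.range (obsMat C A)ᵀ.mulVecLin)
    (hu : (obsMat C A).mulVec u = 0) : d ⬝ᵥ u = 0 := by
  obtain ⟨y, hy⟩ := hd
  rw [Matrix.mulVecLin_apply] at hy
  rw [← hy, Matrix.mulVec_transpose, ← Matrix.dotProduct_mulVec, hu, dotProduct_zero]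

end aux

/-- Kalman-type decomposition for a skew-symmetric `A`: with `D` an orthonormal basis of
`im(𝒪ᵀ)`, `U` an orthonormal basis of `ker 𝒪`, and `T = [D U]`, the matrix `T` is
orthogonal, `TᵀAT` is block diagonal, and `CT = [C_o 0]`. -/
theorem kalman_decomposition_skew
    {n m ν : ℕ} (hν : ν ≤ n)
    (A : Matrix (Fin n) (Fin n) ℝ) (hA : Aᵀ = -A)
    (C : Matrix (Fin m) (Fin n) ℝ)
    (hrank : (obsMat C A).rank = n - ν)
    (D : Matrix (Fin n) (Fin (n - ν)) ℝ) (U : Matrix (Fin n) (Fin ν) ℝ)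
    (hD : Dᵀ * D = 1)
    (hDspan : LinearMap.range D.mulVecLin = LinearMap.range (obsMat C A)ᵀ.mulVecLin)
    (hU : Uᵀ * U = 1)
    (hUspan : LinearMap.range U.mulVecLin = LinearMap.ker (obsMat C A).mulVecLin) :
    (Matrix.fromCols D U)ᵀ * Matrix.fromCols D U = 1 ∧
    ∃ (Ao : Matrix (Fin (n - ν)) (Fin (n - ν)) ℝ) (Aobar : Matrix (Fin ν) (Fin ν) ℝ)
      (Co : Matrix (Fin m) (Fin (n - ν)) ℝ),
      (Matrix.fromCols D U)ᵀ * A * Matrix.fromCols D U = Matrix.fromBlocks Ao 0 0 Aobar ∧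
      C * Matrix.fromCols D U = Matrix.fromCols Co 0 := by
  -- columns of D are in the range of 𝒪ᵀ
  have hDcol : ∀ a, (fun i => D i a) ∈ LinearMap.range (obsMat C A)ᵀ.mulVecLin := by
    intro a
    rw [← hDspan]
    refine ⟨Pi.single a 1, ?_⟩
    rw [Matrix.mulVecLin_apply, Matrix.mulVec_single]
    simp
    rfl
  -- columns of U are in the kernel of 𝒪
  have hUcol : ∀ b, (obsMat C A).mulVec (fun i => U i b) = 0 := by
    intro b
    have : (fun i => U i b) ∈ LinearMap.range U.mulVecLin := by
      refine ⟨Pi.single b 1, ?_⟩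
      rw [Matrix.mulVecLin_apply, Matrix.mulVec_single]
      simp
      rfl
    rw [hUspan, LinearMap.mem_ker, Matrix.mulVecLin_apply] at this
    exact this
  -- D ⊥ U
  have hDtU : Dᵀ * U = 0 := by
    ext a b
    have := range_dot_ker (fun i => D i a) (fun i => U i b) (hDcol a) (hUcol b)
    simpa [Matrix.mul_apply, dotProduct] using this
  have hUtD : Uᵀ * D = 0 := by
    have := congrArg Matrix.transpose hDtU
    simpa [Matrix.transpose_mul] using this
  -- Dᵀ A U = 0
  have hDAU : Dᵀ * (A * U) = 0 := by
    ext a b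
    have hk : (obsMat C A).mulVec (A.mulVec fun i => U i b) = 0 :=
      ker_obs_invariant _ (hUcol b)
    have := range_dot_ker (fun i => D i a) (A.mulVec fun i => U i b) (hDcol a) hk
    simp only [dotProduct, Matrix.mulVec] at this
    simp [Matrix.mul_apply, dotProduct, Finset.mul_sum, Matrix.zero_apply]
    rw [← this]
    congr 1
    funext i
    rw [Finset.mul_sum]
  -- Uᵀ A D = 0, using skew-symmetry
  have hUAD : Uᵀ * (A * D) = 0 := by
    have h1 : Dᵀ * (Aᵀ * U) = 0 := by
      rw [hA]
      simpa using congrArg Neg.neg hDAU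
    have h2 := congrArg Matrix.transpose h1
    simp only [Matrix.transpose_mul, Matrix.transpose_transpose, Matrix.transpose_zero] at h2
    rw [Matrix.mul_assoc] at h2
    exact h2
  -- C U = 0
  have hCU : C * U = 0 := by
    ext i b
    have h0 := ker_obs_pow (C := C) (A := A) (fun j => U j b) (hUcol b) 0
    rw [pow_zero, Matrix.mul_one] at h0
    have := congrFun h0 i
    simpa [Matrix.mulVec, dotProduct, Matrix.mul_apply, Matrix.zero_apply] using this
  constructor
  · rw [Matrix.transpose_fromCols, Matrix.fromRows_mul_fromCols, hD, hU, hDtU, hUtD,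
      ← Matrix.fromBlocks_one]
  · refine ⟨Dᵀ * A * D, Uᵀ * A * U, C * D, ?_, ?_⟩
    · rw [Matrix.transpose_fromCols, Matrix.mul_assoc, Matrix.mul_fromCols,
        Matrix.fromRows_mul_fromCols, hDAU, hUAD, Matrix.mul_assoc, Matrix.mul_assoc]
    · rw [Matrix.mul_fromCols, hCU]
end

section
/- Let A ∈ ℝ^{n×n} be a matrix, C_i ∈ ℝ^{m_i×n} for i = 1,…,N with observability matrices 𝒪_i, and suppose the stacked pair (C, A) with C = col(C_1,…,C_N) is observable. Let U_i ∈ ℝ^{n×ν_i} have full column rank with im(U_i) = ker(𝒪_i), and let U = blockdiag(U_1,…,U_N) ∈ ℝ^{Nn×ν}, ν = Σν_i. Let L be a symmetric positive semi-definite matrix whose kernel is spanned by 1_N. Then the matrix Uᵀ(L ⊗ I_n)U is symmetric positive definite. -/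
open Matrix Kronecker

/-- The block diagonal matrix `U = blockdiag(U₁, …, U_N)` with `Uᵢ : ℝ^{n×νᵢ}`. -/
def blockDiagU {N n : ℕ} {ν : Fin N → ℕ} (U : ∀ i, Matrix (Fin n) (Fin (ν i)) ℝ) :
    Matrix (Fin N × Fin n) ((i : Fin N) × Fin (ν i)) ℝ :=
  Matrix.of fun p q => if p.1 = q.1 then U q.1 p.2 q.2 else 0

lemma blockDiagU_mulVec_apply {N n : ℕ} {ν : Fin N → ℕ}
    (U : ∀ i, Matrix (Fin n) (Fin (ν i)) ℝ)
    (x : ((i : Fin N) × Fin (ν i)) → ℝ) (i : Fin N) (j : Fin n) :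
    ((blockDiagU U) *ᵥ x) (i, j) = ((U i) *ᵥ (fun k => x ⟨i, k⟩)) j := by
  have h : (Finset.univ : Finset ((i : Fin N) × Fin (ν i)))
      = Finset.univ.sigma (fun _ => Finset.univ) := rfl
  simp only [blockDiagU, mulVec, dotProduct, of_apply, h, Finset.sum_sigma]
  simp [ite_mul, Finset.sum_ite_eq, Finset.sum_ite_eq']

lemma kron_quad {N n : ℕ} (L : Matrix (Fin N) (Fin N) ℝ) (y : Fin N × Fin n → ℝ) :
    y ⬝ᵥ (L ⊗ₖ (1 : Matrix (Fin n) (Fin n) ℝ)) *ᵥ y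
      = ∑ j : Fin n, (fun a => y (a, j)) ⬝ᵥ L *ᵥ (fun a => y (a, j)) := by
  simp only [dotProduct, mulVec, kroneckerMap_apply, Fintype.sum_prod_type, Matrix.one_apply,
    mul_ite, mul_one, mul_zero, ite_mul, zero_mul, Finset.sum_ite_eq, Finset.sum_ite_eq',
    Finset.mem_univ, if_true]
  rw [Finset.sum_comm]

/-- If `(C, A)` is collectively observable, `im(Uᵢ) = ker 𝒪ᵢ` with `Uᵢ` of full column
rank, and `L` is a symmetric PSD matrix with kernel spanned by `1_N`, then
`Uᵀ (L ⊗ I_n) U` is (symmetric) positive definite. -/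
theorem UT_L_kron_U_posdef
    {N n : ℕ} {m ν : Fin N → ℕ}
    (A : Matrix (Fin n) (Fin n) ℝ)
    (C : ∀ i, Matrix (Fin (m i)) (Fin n) ℝ)
    (hobs : ⨅ i, LinearMap.ker (obsMat (C i) A).mulVecLin = ⊥)
    (U : ∀ i, Matrix (Fin n) (Fin (ν i)) ℝ)
    (hUrank : ∀ i, Function.Injective (U i).mulVecLin)
    (hUker : ∀ i, LinearMap.range (U i).mulVecLin = LinearMap.ker (obsMat (C i) A).mulVecLin)
    (L : Matrix (Fin N) (Fin N) ℝ)
    (hL : L.PosSemidef)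
    (hkerL : LinearMap.ker L.mulVecLin = Submodule.span ℝ {fun _ => (1 : ℝ)}) :
    ((blockDiagU U)ᵀ * (L ⊗ₖ (1 : Matrix (Fin n) (Fin n) ℝ)) * blockDiagU U).PosDef := by
  set B := blockDiagU U with hB
  set K := (L ⊗ₖ (1 : Matrix (Fin n) (Fin n) ℝ)) with hK
  have hBT : Bᵀ = Bᴴ := by
    ext p q; simp [conjTranspose_apply]
  have hKherm : K.IsHermitian := by
    ext ⟨i, j⟩ ⟨a, b⟩
    have hsym : L a i = L i a := by
      have := congrFun (congrFun hL.1 i) a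
      simpa [conjTranspose_apply] using this
    simp [hK, conjTranspose_apply, Matrix.one_apply, hsym, eq_comm]
  refine posDef_iff_dotProduct_mulVec.mpr ⟨?_, ?_⟩
  · rw [hBT]
    exact isHermitian_conjTranspose_mul_mul B hKherm
  · intro x hx
    have hquad : x ⬝ᵥ (Bᵀ * K * B) *ᵥ x = (B *ᵥ x) ⬝ᵥ K *ᵥ (B *ᵥ x) := by
      rw [← mulVec_mulVec, ← mulVec_mulVec, dotProduct_mulVec, vecMul_transpose]
    set y := B *ᵥ x with hy
    have hterm : ∀ j : Fin n, 0 ≤ (fun a => y (a, j)) ⬝ᵥ L *ᵥ (fun a => y (a, j)) := by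
      intro j
      simpa using hL.dotProduct_mulVec_nonneg (fun a => y (a, j))
    have hsum : x ⬝ᵥ (Bᵀ * K * B) *ᵥ x
        = ∑ j : Fin n, (fun a => y (a, j)) ⬝ᵥ L *ᵥ (fun a => y (a, j)) := by
      rw [hquad, hK, kron_quad]
    have hge : 0 ≤ x ⬝ᵥ (Bᵀ * K * B) *ᵥ x := by
      rw [hsum]; exact Finset.sum_nonneg fun j _ => hterm j
    have hne : x ⬝ᵥ (Bᵀ * K * B) *ᵥ x ≠ 0 := by
      intro h0
      rw [hsum] at h0
      have hzero : ∀ j : Fin n, (fun a => y (a, j)) ⬝ᵥ L *ᵥ (fun a => y (a, j)) = 0 := by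
        intro j
        exact (Finset.sum_eq_zero_iff_of_nonneg fun j _ => hterm j).mp h0 j (Finset.mem_univ j)
      have hkerj : ∀ j : Fin n, (fun a => y (a, j)) ∈ LinearMap.ker L.mulVecLin := by
        intro j
        rw [LinearMap.mem_ker, mulVecLin_apply]
        exact (hL.dotProduct_mulVec_zero_iff (fun a => y (a, j))).mp (by simpa using hzero j)
      have hc : ∀ j : Fin n, ∃ c : ℝ, ∀ a : Fin N, y (a, j) = c := by
        intro j
        have hmem : (fun a => y (a, j)) ∈ Submodule.span ℝ {fun _ => (1 : ℝ)} := by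
          rw [← hkerL]; exact hkerj j
        obtain ⟨c, hc⟩ := Submodule.mem_span_singleton.mp hmem
        exact ⟨c, fun a => by simpa using (congrFun hc a).symm⟩
      choose z hz using hc
      have hz0 : z = 0 := by
        have hzmem : z ∈ (⊥ : Submodule ℝ (Fin n → ℝ)) := by
          rw [← hobs, Submodule.mem_iInf]
          intro i
          rw [← hUker i]
          refine ⟨fun k => x ⟨i, k⟩, ?_⟩
          funext j
          rw [mulVecLin_apply, ← blockDiagU_mulVec_apply U x i j]
          exact hz j i
        simpa using hzmem
      have hx0 : x = 0 := by
        funext q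
        obtain ⟨i, k⟩ := q
        have hUi : (U i).mulVecLin (fun k => x ⟨i, k⟩) = (U i).mulVecLin 0 := by
          funext j
          have h1 : ((U i) *ᵥ (fun k => x ⟨i, k⟩)) j = y (i, j) :=
            (blockDiagU_mulVec_apply U x i j).symm
          have h2 : y (i, j) = 0 := (hz j i).trans (congrFun hz0 j)
          simp [mulVecLin_apply, h1, h2]
        have := hUrank i hUi
        have := congrFun this k
        simpa using this
      exact hx hx0
    rw [star_trivial]; exact lt_of_le_of_ne hge (Ne.symm hne)
end

section
/- Consider the linear time-varying system η̇(t) = -Q Uᵀ(L_{σ(t)} ⊗ I_n)U η(t) where Q is symmetric positive definite. Assume joint connectivity and collective observability so that the observability Gramian bound α₁I ≤ G_η(t*, t*+T_o) ≤ α₂I holds for the output y = (L_{σ(t)}^{1/2} ⊗ I_n)Uη. Then the system is exponentially stable: there exist c, λ > 0 such that ‖η(t)‖ ≤ c e^{-λ(t-t₀)}‖η(t₀)‖ for all t ≥ t₀ ≥ 0 and all initial conditions. -/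
open Matrix Kronecker

section Aux

variable {νt : ℕ}

private lemma quad_bounds' {P : Matrix (Fin νt) (Fin νt) ℝ} (hP : P.PosDef) :
    ∃ c₁ c₂ : ℝ, 0 < c₁ ∧ 0 < c₂ ∧ ∀ x : EuclideanSpace ℝ (Fin νt),
      c₁ * ‖x‖ ^ 2 ≤ (inner ℝ x (toEuclideanLin P x) : ℝ) ∧
      (inner ℝ x (toEuclideanLin P x) : ℝ) ≤ c₂ * ‖x‖ ^ 2 := by
  classical
  set clmP : EuclideanSpace ℝ (Fin νt) →L[ℝ] EuclideanSpace ℝ (Fin νt) :=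
    Matrix.toEuclideanCLM (𝕜 := ℝ) P with hclmP
  have hclm_apply : ∀ x, clmP x = toEuclideanLin P x := fun _ => rfl
  have hcont : Continuous (fun x : EuclideanSpace ℝ (Fin νt) =>
      (inner ℝ x (toEuclideanLin P x) : ℝ)) := by
    have hc : Continuous fun x : EuclideanSpace ℝ (Fin νt) => clmP x := clmP.continuous
    exact continuous_id.inner hc
  have upper : ∀ x : EuclideanSpace ℝ (Fin νt),
      (inner ℝ x (toEuclideanLin P x) : ℝ) ≤ (‖clmP‖ + 1) * ‖x‖ ^ 2 := by
    intro x
    calc (inner ℝ x (toEuclideanLin P x) : ℝ) ≤ ‖x‖ * ‖toEuclideanLin P x‖ :=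
        real_inner_le_norm _ _
    _ ≤ ‖x‖ * (‖clmP‖ * ‖x‖) := by
        have := clmP.le_opNorm x
        rw [hclm_apply] at this
        exact mul_le_mul_of_nonneg_left this (norm_nonneg x)
    _ ≤ (‖clmP‖ + 1) * ‖x‖ ^ 2 := by nlinarith [norm_nonneg x, norm_nonneg clmP]
  rcases isEmpty_or_nonempty (Fin νt) with he | hne
  · exact ⟨1, 1, one_pos, one_pos, fun x => by
      have hx : x = 0 := Subsingleton.elim x 0
      simp [hx]⟩
  · haveI : Nontrivial (EuclideanSpace ℝ (Fin νt)) := inferInstance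
    obtain ⟨x₀, hx₀mem, hx₀min⟩ :=
      (isCompact_sphere (0 : EuclideanSpace ℝ (Fin νt)) 1).exists_isMinOn
        ((NormedSpace.sphere_nonempty).2 zero_le_one) hcont.continuousOn
    have hx₀norm : ‖x₀‖ = 1 := by simpa using mem_sphere_zero_iff_norm.1 hx₀mem
    have hx₀ne : x₀ ≠ 0 := by intro h; rw [h] at hx₀norm; simp at hx₀norm
    set c₁ := (inner ℝ x₀ (toEuclideanLin P x₀) : ℝ) with hc₁
    have hc₁pos : 0 < c₁ := by
      have := hP.dotProduct_mulVec_pos (x := WithLp.equiv 2 _ x₀) ?hne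
      · simpa [PiLp.inner_apply, dotProduct, Matrix.toEuclideanLin_apply,
          RCLike.inner_apply, hc₁, mul_comm] using this
      · case hne => intro h; apply hx₀ne; exact (WithLp.equiv 2 _).injective (by simpa using h)
    refine ⟨c₁, ‖clmP‖ + 1, hc₁pos, by positivity, fun x => ⟨?_, upper x⟩⟩
    rcases eq_or_ne x 0 with rfl | hx
    · simp
    · have hxn : (0:ℝ) < ‖x‖ := norm_pos_iff.2 hx
      have hmem : (‖x‖⁻¹ • x) ∈ Metric.sphere (0 : EuclideanSpace ℝ (Fin νt)) 1 := by
        simp [norm_smul, abs_of_pos (inv_pos.2 hxn), inv_mul_cancel₀ hxn.ne']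
      have hmin := hx₀min hmem
      have hexp : (inner ℝ (‖x‖⁻¹ • x) (toEuclideanLin P (‖x‖⁻¹ • x)) : ℝ)
          = ‖x‖⁻¹ * ‖x‖⁻¹ * (inner ℝ x (toEuclideanLin P x) : ℝ) := by
        rw [_root_.map_smul, real_inner_smul_left, real_inner_smul_right]; ring
      have hmin' : c₁ ≤ ‖x‖⁻¹ * ‖x‖⁻¹ * (inner ℝ x (toEuclideanLin P x) : ℝ) := hexp ▸ hmin
      have h2 : c₁ * ‖x‖ ^ 2 ≤ (‖x‖⁻¹ * ‖x‖⁻¹ * (inner ℝ x (toEuclideanLin P x) : ℝ)) * ‖x‖ ^ 2 :=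
        mul_le_mul_of_nonneg_right hmin' (by positivity)
      have h3 : ‖x‖⁻¹ * ‖x‖⁻¹ * (inner ℝ x (toEuclideanLin P x) : ℝ) * ‖x‖ ^ 2
          = (inner ℝ x (toEuclideanLin P x) : ℝ) := by
        have hinv : ‖x‖ * ‖x‖⁻¹ = 1 := mul_inv_cancel₀ hxn.ne'
        calc ‖x‖⁻¹ * ‖x‖⁻¹ * (inner ℝ x (toEuclideanLin P x) : ℝ) * ‖x‖ ^ 2
            = (inner ℝ x (toEuclideanLin P x) : ℝ) * (‖x‖ * ‖x‖⁻¹) * (‖x‖ * ‖x‖⁻¹) := by ring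
        _ = (inner ℝ x (toEuclideanLin P x) : ℝ) := by rw [hinv]; ring
      linarith [h2, h3.le, h3.ge]

private lemma deriv_val' (Q M : Matrix (Fin νt) (Fin νt) ℝ) (hQ : Q.PosDef) (hMt : Mᵀ = M)
    (x : EuclideanSpace ℝ (Fin νt)) :
    (inner ℝ x (toEuclideanLin Q⁻¹ (toEuclideanLin (-(Q * M)) x)) : ℝ)
      + (inner ℝ (toEuclideanLin (-(Q * M)) x) (toEuclideanLin Q⁻¹ x) : ℝ)
      = -2 * ((WithLp.equiv 2 _ x) ⬝ᵥ (M *ᵥ (WithLp.equiv 2 _ x))) := by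
  have hdet : IsUnit Q.det := isUnit_iff_ne_zero.2 hQ.det_pos.ne'
  have hQP : Q * Q⁻¹ = 1 := Matrix.mul_nonsing_inv Q hdet
  have hPQ : Q⁻¹ * Q = 1 := Matrix.nonsing_inv_mul Q hdet
  have hQt : Qᵀ = Q := by
    have := hQ.isHermitian
    rwa [Matrix.IsHermitian, Matrix.conjTranspose_eq_transpose_of_trivial] at this
  set a := (WithLp.equiv 2 (Fin νt → ℝ)) x with ha
  have e1 : (inner ℝ x (toEuclideanLin Q⁻¹ (toEuclideanLin (-(Q * M)) x)) : ℝ)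
      = -(a ⬝ᵥ (M *ᵥ a)) := by
    have h1 : toEuclideanLin Q⁻¹ (toEuclideanLin (-(Q * M)) x) = toEuclideanLin (-M) x := by
      simp only [Matrix.toEuclideanLin_apply, Equiv.apply_symm_apply, Matrix.mulVec_mulVec]
      congr 1
      rw [Matrix.mul_neg, ← Matrix.mul_assoc, hPQ, Matrix.one_mul]
    rw [h1]
    have : (inner ℝ x (toEuclideanLin (-M) x) : ℝ) = a ⬝ᵥ ((-M) *ᵥ a) := by
      simp [PiLp.inner_apply, dotProduct, RCLike.inner_apply, Matrix.toEuclideanLin_apply,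
        Matrix.neg_mulVec, ha, Pi.neg_apply, neg_mul, Finset.sum_neg_distrib, mul_comm]
    rw [this, Matrix.neg_mulVec, dotProduct_neg]
  have e2 : (inner ℝ (toEuclideanLin (-(Q * M)) x) (toEuclideanLin Q⁻¹ x) : ℝ)
      = -(a ⬝ᵥ (M *ᵥ a)) := by
    have h0 : (inner ℝ (toEuclideanLin (-(Q * M)) x) (toEuclideanLin Q⁻¹ x) : ℝ)
        = ((-(Q * M)) *ᵥ a) ⬝ᵥ (Q⁻¹ *ᵥ a) := by
      simp [PiLp.inner_apply, dotProduct, RCLike.inner_apply, Matrix.toEuclideanLin_apply,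
        Matrix.neg_mulVec, ha, Pi.neg_apply, neg_mul, Finset.sum_neg_distrib, mul_comm]
    rw [h0, Matrix.neg_mulVec, neg_dotProduct, neg_inj]
    calc ((Q * M) *ᵥ a) ⬝ᵥ (Q⁻¹ *ᵥ a)
        = (Q⁻¹ *ᵥ a) ⬝ᵥ ((Q * M) *ᵥ a) := dotProduct_comm _ _
      _ = ((Q⁻¹ *ᵥ a) ᵥ* (Q * M)) ⬝ᵥ a := dotProduct_mulVec _ _ _
      _ = ((Q * M)ᵀ *ᵥ (Q⁻¹ *ᵥ a)) ⬝ᵥ a := by rw [Matrix.mulVec_transpose]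
      _ = (M *ᵥ a) ⬝ᵥ a := by
          rw [Matrix.mulVec_mulVec, Matrix.transpose_mul, hMt, hQt, Matrix.mul_assoc, hQP,
            Matrix.mul_one]
      _ = a ⬝ᵥ (M *ᵥ a) := dotProduct_comm _ _
  rw [e1, e2]; ring

private lemma toEL_mul' (A B : Matrix (Fin νt) (Fin νt) ℝ) (x : EuclideanSpace ℝ (Fin νt)) :
    toEuclideanLin (A * B) x = toEuclideanLin A (toEuclideanLin B x) := by
  simp [Matrix.toEuclideanLin_apply, Matrix.mulVec_mulVec]

private lemma M_psd' {N n : ℕ} (U : Matrix (Fin N × Fin n) (Fin νt) ℝ)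
    (L : Matrix (Fin N) (Fin N) ℝ) (hL : L.PosSemidef) :
    (Uᵀ * (L ⊗ₖ (1 : Matrix (Fin n) (Fin n) ℝ)) * U).PosSemidef := by
  obtain ⟨B, hB⟩ : ∃ B : Matrix (Fin N) (Fin N) ℝ, L = Bᴴ * B := by
    open scoped MatrixOrder in exact CStarAlgebra.nonneg_iff_eq_star_mul_self.mp hL.nonneg
  have hB' : Bᴴ = Bᵀ := Matrix.conjTranspose_eq_transpose_of_trivial B
  have hk : (L ⊗ₖ (1 : Matrix (Fin n) (Fin n) ℝ))
      = (B ⊗ₖ (1 : Matrix (Fin n) (Fin n) ℝ))ᴴ * (B ⊗ₖ (1 : Matrix (Fin n) (Fin n) ℝ)) := by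
    rw [Matrix.conjTranspose_eq_transpose_of_trivial, ← Matrix.kroneckerMap_transpose,
      ← Matrix.mul_kronecker_mul, hB, hB']
    simp
  have : (Uᴴ * (L ⊗ₖ (1 : Matrix (Fin n) (Fin n) ℝ)) * U).PosSemidef :=
    Matrix.PosSemidef.conjTranspose_mul_mul_same
      (hk ▸ Matrix.posSemidef_conjTranspose_mul_self _) U
  simpa [Matrix.conjTranspose_eq_transpose_of_trivial] using this

end Aux

set_option maxHeartbeats 2000000 in
/-- Exponential stability of the switched system `η̇(t) = -Q Uᵀ(L_{σ(t)} ⊗ I_n)U η(t)`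
with `Q` symmetric positive definite, assuming the uniform observability-Gramian bound
`α₁ I ≤ G_η(t*, t*+T_o) ≤ α₂ I` (expressed through the state transition matrix `Φ`):
there exist `c, λ > 0` with `‖η(t)‖ ≤ c e^{-λ(t-t₀)} ‖η(t₀)‖` for every solution. -/
theorem eta_system_exponentially_stable
    {N n n₀ νt : ℕ}
    (U : Matrix (Fin N × Fin n) (Fin νt) ℝ)
    (Lap : Fin n₀ → Matrix (Fin N) (Fin N) ℝ)
    (hLap : ∀ p, (Lap p).PosSemidef)
    (σ : ℝ → Fin n₀)
    (Q : Matrix (Fin νt) (Fin νt) ℝ) (hQ : Q.PosDef)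
    (Φ : ℝ → ℝ → Matrix (Fin νt) (Fin νt) ℝ)
    (hΦ0 : ∀ s, Φ s s = 1)
    (hΦd : ∀ (s : ℝ) (w : EuclideanSpace ℝ (Fin νt)) (t : ℝ),
      HasDerivAt (fun u => Matrix.toEuclideanLin (Φ u s) w)
        (Matrix.toEuclideanLin
          (-(Q * (Uᵀ * (Lap (σ t) ⊗ₖ (1 : Matrix (Fin n) (Fin n) ℝ)) * U)) * Φ t s) w) t)
    (To α₁ α₂ : ℝ) (hTo : 0 < To) (hα₁ : 0 < α₁) (hα₁₂ : α₁ ≤ α₂)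
    (hGram : ∀ tstar : ℝ, 0 ≤ tstar → ∀ v : Fin νt → ℝ,
      α₁ * (∑ i, v i ^ 2) ≤
        (∫ t in tstar..(tstar + To),
          ((Φ t tstar).mulVec v) ⬝ᵥ
            ((Uᵀ * (Lap (σ t) ⊗ₖ (1 : Matrix (Fin n) (Fin n) ℝ)) * U).mulVec
              ((Φ t tstar).mulVec v))) ∧
      (∫ t in tstar..(tstar + To),
          ((Φ t tstar).mulVec v) ⬝ᵥ
            ((Uᵀ * (Lap (σ t) ⊗ₖ (1 : Matrix (Fin n) (Fin n) ℝ)) * U).mulVec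
              ((Φ t tstar).mulVec v))) ≤ α₂ * (∑ i, v i ^ 2)) :
    ∃ c lam : ℝ, 0 < c ∧ 0 < lam ∧
      ∀ η : ℝ → EuclideanSpace ℝ (Fin νt),
        (∀ t, HasDerivAt η
          (Matrix.toEuclideanLin
            (-(Q * (Uᵀ * (Lap (σ t) ⊗ₖ (1 : Matrix (Fin n) (Fin n) ℝ)) * U))) (η t)) t) →
        ∀ t₀ t : ℝ, 0 ≤ t₀ → t₀ ≤ t →
          ‖η t‖ ≤ c * Real.exp (-lam * (t - t₀)) * ‖η t₀‖ := by
  classical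
  -- notation
  set Mmat : Fin n₀ → Matrix (Fin νt) (Fin νt) ℝ :=
    fun p => Uᵀ * (Lap p ⊗ₖ (1 : Matrix (Fin n) (Fin n) ℝ)) * U with hMmat
  set Amat : Fin n₀ → Matrix (Fin νt) (Fin νt) ℝ := fun p => -(Q * Mmat p) with hAmat
  have hMpsd : ∀ p, (Mmat p).PosSemidef := fun p => M_psd' U (Lap p) (hLap p)
  have hMt : ∀ p, (Mmat p)ᵀ = Mmat p := by
    intro p
    have := (hMpsd p).1
    rwa [Matrix.IsHermitian, Matrix.conjTranspose_eq_transpose_of_trivial] at this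
  obtain ⟨c₁, c₂, hc₁, hc₂, hquad⟩ := quad_bounds' (hQ.inv)
  -- contraction factor
  set ρ : ℝ := max (1 - 2 * α₁ / c₂) (1/2) with hρ
  have hρpos : 0 < ρ := lt_of_lt_of_le one_half_pos (le_max_right _ _)
  have hρlt : ρ < 1 := by
    apply max_lt _ (by norm_num)
    have : 0 < 2 * α₁ / c₂ := by positivity
    linarith
  set lam : ℝ := (-Real.log ρ) / (2 * To) with hlam
  have hlogneg : Real.log ρ < 0 := Real.log_neg hρpos hρlt
  have hlampos : 0 < lam := by
    apply div_pos (by linarith) (by linarith)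
  set c : ℝ := Real.sqrt (c₂ / (c₁ * ρ)) with hc
  have hcpos : 0 < c := Real.sqrt_pos.2 (by positivity)
  refine ⟨c, lam, hcpos, hlampos, ?_⟩
  intro η hη t₀ t ht₀ ht₀t
  -- Lyapunov function
  set V : ℝ → ℝ := fun s => (inner ℝ (η s) (toEuclideanLin Q⁻¹ (η s)) : ℝ) with hV
  set W : ℝ → ℝ := fun s =>
    (WithLp.equiv 2 _ (η s)) ⬝ᵥ ((Mmat (σ s)) *ᵥ (WithLp.equiv 2 _ (η s))) with hW
  set clmP : EuclideanSpace ℝ (Fin νt) →L[ℝ] EuclideanSpace ℝ (Fin νt) :=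
    Matrix.toEuclideanCLM (𝕜 := ℝ) Q⁻¹ with hclmP
  have hVd : ∀ s, HasDerivAt V (-2 * W s) s := by
    intro s
    have h1 : HasDerivAt (fun u => clmP (η u))
        (clmP (Matrix.toEuclideanLin (Amat (σ s)) (η s))) s :=
      clmP.hasFDerivAt.comp_hasDerivAt s (hη s)
    have h2 := (HasDerivAt.inner ℝ (hη s) h1)
    have h3 : (inner ℝ (η s) (clmP (Matrix.toEuclideanLin (Amat (σ s)) (η s))) : ℝ)
        + (inner ℝ (Matrix.toEuclideanLin (Amat (σ s)) (η s)) (clmP (η s)) : ℝ)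
        = -2 * W s := by
      have := deriv_val' Q (Mmat (σ s)) hQ (hMt (σ s)) (η s)
      exact this
    rw [h3] at h2
    exact h2
  have hWnonneg : ∀ s, 0 ≤ W s := by
    intro s
    have := (hMpsd (σ s)).dotProduct_mulVec_nonneg (WithLp.equiv 2 _ (η s))
    simpa [hW] using this
  -- V is antitone
  have hVanti : Antitone V := by
    apply antitone_of_deriv_nonpos
    · exact fun s => (hVd s).differentiableAt
    · intro s
      rw [(hVd s).deriv]
      have := hWnonneg s
      linarith
  have hVnonneg : ∀ s, 0 ≤ V s := by
    intro s
    have := (hquad (η s)).1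
    nlinarith [norm_nonneg (η s)]
  -- Lipschitz field and uniqueness setup
  haveI : Nonempty (Fin n₀) := ⟨σ 0⟩
  set K : NNReal := Finset.univ.sup (fun p => ‖Matrix.toEuclideanCLM (𝕜 := ℝ) (Amat p)‖₊) with hK
  set vf : ℝ → EuclideanSpace ℝ (Fin νt) → EuclideanSpace ℝ (Fin νt) :=
    fun s x => Matrix.toEuclideanCLM (𝕜 := ℝ) (Amat (σ s)) x with hvf
  have hlip : ∀ s, LipschitzWith K (vf s) := by
    intro s
    exact (Matrix.toEuclideanCLM (𝕜 := ℝ) (Amat (σ s))).lipschitz.weaken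
      (Finset.le_sup (f := fun p => ‖Matrix.toEuclideanCLM (𝕜 := ℝ) (Amat p)‖₊)
        (Finset.mem_univ (σ s)))
  have hηd' : ∀ s, HasDerivAt η (vf s (η s)) s := fun s => hη s
  have hηcont : Continuous η := continuous_iff_continuousAt.2 fun s => (hη s).continuousAt
  have hηd' : ∀ s, HasDerivAt η (vf s (η s)) s := fun s => hη s
  -- key contraction step
  have key : ∀ a : ℝ, 0 ≤ a → V (a + To) ≤ ρ * V a := by
    intro a haa
    by_cases hva : η a = 0
    · have hzero : η (a + To) = 0 := by
        have huniq := ODE_solution_unique (v := vf) (K := K) hlip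
          (f := η) (g := fun _ => (0 : EuclideanSpace ℝ (Fin νt))) (a := a) (b := a + To)
          hηcont.continuousOn
          (fun s _ => (hηd' s).hasDerivWithinAt)
          continuousOn_const
          (fun s _ => by
            have h0 : vf s 0 = 0 := (Matrix.toEuclideanCLM (𝕜 := ℝ) (Amat (σ s))).map_zero
            simpa [h0] using
              (hasDerivWithinAt_const s (Set.Ici s) (0 : EuclideanSpace ℝ (Fin νt))))
          (by simpa using hva)
        exact huniq ⟨by linarith, le_refl _⟩
      have hVa0 : V a = 0 := by simp [hV, hva]
      have hVb0 : V (a + To) = 0 := by simp [hV, hzero]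
      rw [hVa0, hVb0]; simp
    · set v : Fin νt → ℝ := WithLp.equiv 2 _ (η a) with hv
      set ζ : ℝ → EuclideanSpace ℝ (Fin νt) := fun s => toEuclideanLin (Φ s a) (η a) with hζ
      have hζd : ∀ s, HasDerivAt ζ (vf s (ζ s)) s := by
        intro s
        have h := hΦd a (η a) s
        have he : toEuclideanLin (Amat (σ s) * Φ s a) (η a) = vf s (ζ s) := by
          rw [toEL_mul']; rfl
        rw [← he]; exact h
      have hζcont : Continuous ζ := continuous_iff_continuousAt.2 fun s => (hζd s).continuousAt
      have hζa : η a = ζ a := by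
        simp [hζ, hΦ0, Matrix.toEuclideanLin_apply]
      have huniq : Set.EqOn η ζ (Set.Icc a (a + To)) :=
        ODE_solution_unique hlip hηcont.continuousOn (fun s _ => (hηd' s).hasDerivWithinAt)
          hζcont.continuousOn (fun s _ => (hζd s).hasDerivWithinAt) hζa
      obtain ⟨hlow, hup⟩ := hGram a haa v
      set g : ℝ → ℝ :=
        fun s => ((Φ s a) *ᵥ v) ⬝ᵥ ((Mmat (σ s)) *ᵥ ((Φ s a) *ᵥ v)) with hg
      have hlow' : α₁ * (∑ i, v i ^ 2) ≤ ∫ s in a..(a + To), g s := hlow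
      have hnormv : (∑ i, v i ^ 2) = ‖η a‖ ^ 2 := by
        rw [EuclideanSpace.norm_eq, Real.sq_sqrt (by positivity)]
        simp [hv, Real.norm_eq_abs, sq_abs]
      have hvpos : 0 < ‖η a‖ ^ 2 := by
        have : 0 < ‖η a‖ := norm_pos_iff.2 hva
        positivity
      have hInt : IntervalIntegrable g MeasureTheory.volume a (a + To) := by
        by_contra hni
        rw [intervalIntegral.integral_undef hni] at hlow'
        rw [hnormv] at hlow'
        nlinarith
      have hIlow : α₁ * ‖η a‖ ^ 2 ≤ ∫ s in a..(a + To), g s := by rwa [hnormv] at hlow'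
      have hderivOn : ∀ s ∈ Set.uIcc a (a + To), HasDerivAt V (-2 * g s) s := by
        intro s hs
        rw [Set.uIcc_of_le (by linarith : a ≤ a + To)] at hs
        have hηζ : η s = ζ s := huniq hs
        have hWg : W s = g s := by
          simp only [hW, hg]
          rw [hηζ]
          simp [hζ, Matrix.toEuclideanLin_apply, hv]
        rw [← hWg]
        exact hVd s
      have hint2 : IntervalIntegrable (fun s => -2 * g s) MeasureTheory.volume a (a + To) :=
        hInt.const_mul (-2)
      have hftc := intervalIntegral.integral_eq_sub_of_hasDerivAt hderivOn hint2
      have hconst : ∫ s in a..(a + To), (-2 : ℝ) * g s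
          = -2 * ∫ s in a..(a + To), g s := intervalIntegral.integral_const_mul _ _
      have hVdiff : V (a + To) - V a = -2 * ∫ s in a..(a + To), g s := by
        rw [← hconst, hftc]
      have hVa_up : V a ≤ c₂ * ‖η a‖ ^ 2 := (hquad (η a)).2
      have hρge : 1 - 2 * α₁ / c₂ ≤ ρ := le_max_left _ _
      have hdiv : 2 * α₁ / c₂ * c₂ = 2 * α₁ := div_mul_cancel₀ _ hc₂.ne'
      have hp_nonneg : (0:ℝ) ≤ 2 * α₁ / c₂ := by positivity
      have e2 : (2 * α₁ / c₂) * V a ≤ (2 * α₁ / c₂) * (c₂ * ‖η a‖ ^ 2) :=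
        mul_le_mul_of_nonneg_left hVa_up hp_nonneg
      have e3 : (1 - 2 * α₁ / c₂) * V a ≤ ρ * V a :=
        mul_le_mul_of_nonneg_right hρge (hVnonneg a)
      have e2' : (2 * α₁ / c₂) * (c₂ * ‖η a‖ ^ 2) = 2 * α₁ * ‖η a‖ ^ 2 := by
        rw [show (2 * α₁ / c₂) * (c₂ * ‖η a‖ ^ 2) = (2 * α₁ / c₂ * c₂) * ‖η a‖ ^ 2 by ring, hdiv]
      linarith [hVdiff, hIlow, e2, e2', e3]
  -- iteration
  have iter : ∀ k : ℕ, V (t₀ + k * To) ≤ ρ ^ k * V t₀ := by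
    intro k
    induction k with
    | zero => simp
    | succ m ih =>
      have harg : t₀ + ((m : ℝ) + 1) * To = (t₀ + m * To) + To := by ring
      have hnn : (0:ℝ) ≤ t₀ + m * To := by positivity
      calc V (t₀ + ((m + 1 : ℕ) : ℝ) * To) = V ((t₀ + m * To) + To) := by
            push_cast
            rw [harg]
      _ ≤ ρ * V (t₀ + m * To) := key _ hnn
      _ ≤ ρ * (ρ ^ m * V t₀) := mul_le_mul_of_nonneg_left ih hρpos.le
      _ = ρ ^ (m + 1) * V t₀ := by ring
  -- conclude
  set k : ℕ := ⌊(t - t₀) / To⌋₊ with hk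
  have hkle : (k : ℝ) ≤ (t - t₀) / To := Nat.floor_le (div_nonneg (by linarith) hTo.le)
  have hk1 : t₀ + k * To ≤ t := by
    have h := (le_div_iff₀ hTo).1 hkle
    linarith
  have h2 : V t ≤ V (t₀ + k * To) := hVanti hk1
  have h3 : V t ≤ ρ ^ k * V t₀ := le_trans h2 (iter k)
  have hρk : (ρ : ℝ) ^ k ≤ Real.exp (-(2 * lam) * (t - t₀)) / ρ := by
    have hk2 : (t - t₀) / To < k + 1 := Nat.lt_floor_add_one _
    have hρk_eq : (ρ : ℝ) ^ k = Real.exp ((k : ℝ) * Real.log ρ) := by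
      rw [← Real.log_pow, Real.exp_log (pow_pos hρpos k)]
    have hmono : (k : ℝ) * Real.log ρ ≤ ((t - t₀) / To - 1) * Real.log ρ := by
      apply mul_le_mul_of_nonpos_right _ hlogneg.le
      linarith
    have hlogρ : Real.log ρ = -(2 * To * lam) := by
      rw [hlam]; field_simp
    have harg : ((t - t₀) / To - 1) * Real.log ρ
        = -(2 * lam) * (t - t₀) + (- Real.log ρ) := by
      rw [hlogρ]; field_simp; ring
    calc (ρ : ℝ) ^ k = Real.exp ((k : ℝ) * Real.log ρ) := hρk_eq
    _ ≤ Real.exp (((t - t₀) / To - 1) * Real.log ρ) := Real.exp_le_exp.2 hmono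
    _ = Real.exp (-(2 * lam) * (t - t₀)) * Real.exp (- Real.log ρ) := by
        rw [harg, Real.exp_add]
    _ = Real.exp (-(2 * lam) * (t - t₀)) / ρ := by
        rw [Real.exp_neg, Real.exp_log hρpos]
        ring
  have hVt₀ : V t₀ ≤ c₂ * ‖η t₀‖ ^ 2 := (hquad (η t₀)).2
  have h5 : c₁ * ‖η t‖ ^ 2 ≤ V t := (hquad (η t)).1
  have h6 : V t ≤ (Real.exp (-(2 * lam) * (t - t₀)) / ρ) * (c₂ * ‖η t₀‖ ^ 2) := by
    calc V t ≤ ρ ^ k * V t₀ := h3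
    _ ≤ ρ ^ k * (c₂ * ‖η t₀‖ ^ 2) :=
        mul_le_mul_of_nonneg_left hVt₀ (pow_nonneg hρpos.le k)
    _ ≤ (Real.exp (-(2 * lam) * (t - t₀)) / ρ) * (c₂ * ‖η t₀‖ ^ 2) :=
        mul_le_mul_of_nonneg_right hρk (by positivity)
  have hrhs_sq : (c * Real.exp (-lam * (t - t₀)) * ‖η t₀‖) ^ 2
      = c₂ / (c₁ * ρ) * Real.exp (-(2 * lam) * (t - t₀)) * ‖η t₀‖ ^ 2 := by
    have hcsq : c ^ 2 = c₂ / (c₁ * ρ) := Real.sq_sqrt (by positivity)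
    have hesq : Real.exp (-lam * (t - t₀)) ^ 2 = Real.exp (-(2 * lam) * (t - t₀)) := by
      rw [sq, ← Real.exp_add]; ring_nf
    rw [mul_pow, mul_pow, hcsq, hesq]
  have hsq : ‖η t‖ ^ 2 ≤ (c * Real.exp (-lam * (t - t₀)) * ‖η t₀‖) ^ 2 := by
    rw [hrhs_sq]
    have hc₁' : c₁ * ‖η t‖ ^ 2 ≤ (Real.exp (-(2 * lam) * (t - t₀)) / ρ) * (c₂ * ‖η t₀‖ ^ 2) :=
      le_trans h5 h6
    have h7 : c₁ * ‖η t‖ ^ 2 * ρ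
        ≤ Real.exp (-(2 * lam) * (t - t₀)) * (c₂ * ‖η t₀‖ ^ 2) := by
      rw [div_mul_eq_mul_div, le_div_iff₀ hρpos] at hc₁'
      exact hc₁'
    have hgoal : ‖η t‖ ^ 2 ≤ (c₂ * Real.exp (-(2 * lam) * (t - t₀)) * ‖η t₀‖ ^ 2) / (c₁ * ρ) := by
      rw [le_div_iff₀ (by positivity)]
      calc ‖η t‖ ^ 2 * (c₁ * ρ) = c₁ * ‖η t‖ ^ 2 * ρ := by ring
      _ ≤ Real.exp (-(2 * lam) * (t - t₀)) * (c₂ * ‖η t₀‖ ^ 2) := h7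
      _ = c₂ * Real.exp (-(2 * lam) * (t - t₀)) * ‖η t₀‖ ^ 2 := by ring
    calc ‖η t‖ ^ 2 ≤ _ := hgoal
    _ = c₂ / (c₁ * ρ) * Real.exp (-(2 * lam) * (t - t₀)) * ‖η t₀‖ ^ 2 := by ring
  have := Real.sqrt_le_sqrt hsq
  rwa [Real.sqrt_sq (norm_nonneg _), Real.sqrt_sq (by positivity)] at this
end

section
/- Let V(η) = ½ηᵀQ⁻¹η with Q symmetric positive definite, and suppose along trajectories of η̇ = -QUᵀ(L_{σ(t)} ⊗ I_n)Uη the derivative satisfies V̇(η(t)) = -η(t)ᵀUᵀ(L_{σ(t)} ⊗ I_n)Uη(t) ≤ 0, and the Gramian satisfies G_η(t*, t*+T_o) ≥ α₁I. Then V(η(t*+T_o)) ≤ (1 - ρ)V(η(t*)) for any ρ with 0 < ρ < min{2α₁λ_min(Q), 1}. -/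
open Matrix Kronecker

private lemma key {m : ℕ} (Q : Matrix (Fin m) (Fin m) ℝ) (hQ : Q.PosDef) (ρ α₁ : ℝ)
    (hρ : ∀ i, ρ ≤ 2 * α₁ * hQ.1.eigenvalues i) (v : Fin m → ℝ) :
    ρ * (v ⬝ᵥ Q⁻¹.mulVec v) ≤ 2 * α₁ * ∑ i, v i ^ 2 := by
  classical
  set W : Matrix (Fin m) (Fin m) ℝ := (hQ.1.eigenvectorUnitary : Matrix (Fin m) (Fin m) ℝ) with hW
  set lam := hQ.1.eigenvalues with hlam
  have hWmem := hQ.1.eigenvectorUnitary.2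
  have hWW : W * star W = 1 := (Matrix.mem_unitaryGroup_iff).mp hWmem
  have hWW' : star W * W = 1 := (Matrix.mem_unitaryGroup_iff').mp hWmem
  have hspec : Q = W * Matrix.diagonal lam * star W := by
    simpa using hQ.1.spectral_theorem
  have hQinv : Q⁻¹ = W * Matrix.diagonal (fun i => (lam i)⁻¹) * star W := by
    apply Matrix.inv_eq_right_inv
    rw [hspec]
    calc W * diagonal lam * star W * (W * diagonal (fun i => (lam i)⁻¹) * star W)
        = W * (diagonal lam * ((star W * W) * (diagonal (fun i => (lam i)⁻¹) * star W))) := by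
          simp only [Matrix.mul_assoc]
      _ = 1 := by
          rw [hWW', Matrix.one_mul, ← Matrix.mul_assoc (diagonal lam),
            Matrix.diagonal_mul_diagonal]
          have : (fun i => lam i * (lam i)⁻¹) = fun _ => (1:ℝ) := by
            funext i; exact mul_inv_cancel₀ (ne_of_gt (hQ.eigenvalues_pos i))
          rw [this, Matrix.diagonal_one, Matrix.one_mul, hWW]
  set u := (star W).mulVec v with hu
  have hvW : Matrix.vecMul v W = u := by
    rw [hu]; ext j
    simp [Matrix.vecMul, Matrix.mulVec, dotProduct, star, mul_comm]
  have hform : v ⬝ᵥ Q⁻¹.mulVec v = ∑ i, (lam i)⁻¹ * u i ^ 2 := by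
    rw [hQinv, ← Matrix.mulVec_mulVec, ← Matrix.mulVec_mulVec, Matrix.dotProduct_mulVec v W, hvW]
    simp [Matrix.mulVec_diagonal, dotProduct, ← hu, mul_comm, sq, mul_assoc, mul_left_comm]
  have hnorm : ∑ i, v i ^ 2 = ∑ i, u i ^ 2 := by
    have h1 : ∑ i, u i ^ 2 = u ⬝ᵥ u := by simp [dotProduct, sq]
    have h2 : ∑ i, v i ^ 2 = v ⬝ᵥ v := by simp [dotProduct, sq]
    rw [h1, h2]
    calc v ⬝ᵥ v = v ⬝ᵥ (W * star W).mulVec v := by rw [hWW, Matrix.one_mulVec]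
      _ = v ⬝ᵥ W.mulVec u := by rw [← Matrix.mulVec_mulVec, hu]
      _ = u ⬝ᵥ u := by rw [Matrix.dotProduct_mulVec v W, hvW]
  rw [hform, hnorm, Finset.mul_sum, Finset.mul_sum]
  apply Finset.sum_le_sum
  intro i _
  have hli := hQ.eigenvalues_pos i
  have : ρ * (lam i)⁻¹ ≤ 2 * α₁ := by
    rw [← div_eq_mul_inv, div_le_iff₀ hli]
    exact hρ i
  calc ρ * ((lam i)⁻¹ * u i ^ 2) = (ρ * (lam i)⁻¹) * u i ^ 2 := by ring
    _ ≤ 2 * α₁ * u i ^ 2 := mul_le_mul_of_nonneg_right this (sq_nonneg _)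

/-- One-window contraction of the Lyapunov function `V(η) = ½ ηᵀ Q⁻¹ η` along the
trajectory `η̇ = -Q Uᵀ(L_{σ(t)} ⊗ I_n)U η`: if `V̇(η(t)) = -η(t)ᵀUᵀ(L_{σ(t)} ⊗ I_n)Uη(t) ≤ 0`
and the observability Gramian satisfies `G_η(t*, t*+T_o) ≥ α₁ I`, then
`V(η(t*+T_o)) ≤ (1-ρ) V(η(t*))` for any `0 < ρ < min{2 α₁ λ_min(Q), 1}`. -/
theorem lyapunov_one_window_contraction
    {N n n₀ νt : ℕ}
    (U : Matrix (Fin N × Fin n) (Fin νt) ℝ)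
    (Lap : Fin n₀ → Matrix (Fin N) (Fin N) ℝ)
    (hLap : ∀ p, (Lap p).PosSemidef)
    (σ : ℝ → Fin n₀)
    (Q : Matrix (Fin νt) (Fin νt) ℝ) (hQ : Q.PosDef)
    (tstar To α₁ : ℝ) (htstar : 0 ≤ tstar) (hTo : 0 < To) (hα₁ : 0 < α₁)
    (η : ℝ → Fin νt → ℝ)
    (Φ : ℝ → Matrix (Fin νt) (Fin νt) ℝ)
    (hΦ0 : Φ tstar = 1)
    (hη : ∀ t, η t = (Φ t).mulVec (η tstar))
    (hVdot : ∀ t, HasDerivAt (fun s => (1 / 2 : ℝ) * (η s ⬝ᵥ Q⁻¹.mulVec (η s)))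
      (-(η t ⬝ᵥ ((Uᵀ * (Lap (σ t) ⊗ₖ (1 : Matrix (Fin n) (Fin n) ℝ)) * U).mulVec (η t)))) t)
    (hGram : ∀ v : Fin νt → ℝ,
      α₁ * (∑ i, v i ^ 2) ≤
        ∫ t in tstar..(tstar + To),
          ((Φ t).mulVec v) ⬝ᵥ
            ((Uᵀ * (Lap (σ t) ⊗ₖ (1 : Matrix (Fin n) (Fin n) ℝ)) * U).mulVec
              ((Φ t).mulVec v)))
    (ρ : ℝ) (hρ0 : 0 < ρ) (hρ1 : ρ < 1)
    (hρmin : ∀ i, ρ < 2 * α₁ * hQ.1.eigenvalues i) :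
    (1 / 2 : ℝ) * (η (tstar + To) ⬝ᵥ Q⁻¹.mulVec (η (tstar + To))) ≤
      (1 - ρ) * ((1 / 2 : ℝ) * (η tstar ⬝ᵥ Q⁻¹.mulVec (η tstar))) := by
  classical
  have hρle : ∀ i, ρ ≤ 2 * α₁ * hQ.1.eigenvalues i := fun i => (hρmin i).le
  have hkey := key Q hQ ρ α₁ hρle (η tstar)
  have hGs : α₁ * ∑ i, η tstar i ^ 2 ≤
      ∫ t in tstar..(tstar + To),
        η t ⬝ᵥ ((Uᵀ * (Lap (σ t) ⊗ₖ (1 : Matrix (Fin n) (Fin n) ℝ)) * U).mulVec (η t)) := by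
    simpa only [← hη] using hGram (η tstar)
  by_cases hint : IntervalIntegrable
      (fun t => η t ⬝ᵥ ((Uᵀ * (Lap (σ t) ⊗ₖ (1 : Matrix (Fin n) (Fin n) ℝ)) * U).mulVec (η t)))
      MeasureTheory.volume tstar (tstar + To)
  · have hFTC := intervalIntegral.integral_eq_sub_of_hasDerivAt
      (f := fun s => (1 / 2 : ℝ) * (η s ⬝ᵥ Q⁻¹.mulVec (η s)))
      (f' := fun t => -(η t ⬝ᵥ ((Uᵀ * (Lap (σ t) ⊗ₖ (1 : Matrix (Fin n) (Fin n) ℝ)) * U).mulVec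
        (η t))))
      (fun t _ => hVdot t) hint.neg
    rw [intervalIntegral.integral_neg] at hFTC
    linarith
  · rw [intervalIntegral.integral_undef hint] at hGs
    have hsum : ∑ i, η tstar i ^ 2 = 0 := by
      have h1 : (0:ℝ) ≤ ∑ i, η tstar i ^ 2 := Finset.sum_nonneg fun i _ => sq_nonneg _
      nlinarith
    have h0 : η tstar = 0 := by
      funext i
      have := (Finset.sum_eq_zero_iff_of_nonneg (fun i _ => sq_nonneg (η tstar i))).mp hsum
        i (Finset.mem_univ i)
      exact pow_eq_zero_iff (two_ne_zero) |>.mp this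
    have h0' : η (tstar + To) = 0 := by rw [hη (tstar + To), h0, Matrix.mulVec_zero]
    simp [h0, h0']
end

section
/- Consider ζ̇(t) = (A_ō - Γ Uᵀ(L_{σ(t)} ⊗ I_n)U)ζ(t), where A_ō = blockdiag(A_{1ō},…,A_{Nō}) with each A_{iō} skew-symmetric, Γ = blockdiag(γ₁I_{ν₁},…,γ_N I_{ν_N}) with γ_i > 0, AU_i = U_iA_{iō} for a skew-symmetric A, and U = blockdiag(U_1,…,U_N). If the transformed system η̇ = -ΓUᵀ(L_{σ(t)} ⊗ I_n)Uη is exponentially stable, then the ζ-system is exponentially stable, since η(t) = e^{-A_ō t}ζ(t) satisfies ‖η(t)‖ = ‖ζ(t)‖ for all t and η obeys the transformed dynamics. -/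
open Matrix Kronecker
open scoped RealInnerProductSpace

/-- Exponential stability of a linear time-varying system `ż = M(t) z`. -/
def ExpStable {ι : Type*} [Fintype ι] [DecidableEq ι] (M : ℝ → Matrix ι ι ℝ) : Prop :=
  ∃ c lam : ℝ, 0 < c ∧ 0 < lam ∧
    ∀ z : ℝ → EuclideanSpace ℝ ι,
      (∀ t, HasDerivAt z (Matrix.toEuclideanLin (M t) (z t)) t) →
      ∀ t₀ t : ℝ, 0 ≤ t₀ → t₀ ≤ t → ‖z t‖ ≤ c * Real.exp (-lam * (t - t₀)) * ‖z t₀‖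

/-- A matrix with `Oᵀ * O = 1` preserves the Euclidean norm. -/
lemma norm_toEuclideanLin_of_orth {ι : Type*} [Fintype ι] [DecidableEq ι]
    (O : Matrix ι ι ℝ) (h : Oᵀ * O = 1) (x : EuclideanSpace ℝ ι) :
    ‖Matrix.toEuclideanLin O x‖ = ‖x‖ := by
  have key : ⟪Matrix.toEuclideanLin O x, Matrix.toEuclideanLin O x⟫ = ⟪x, x⟫ := by
    simp only [PiLp.inner_apply, RCLike.inner_apply, starRingEnd_apply, star_trivial,
      Matrix.toEuclideanLin_apply]
    have hd : ∀ y z : ι → ℝ, ∑ i, y i * z i = y ⬝ᵥ z := fun y z => rfl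
    rw [hd, hd, Matrix.dotProduct_mulVec, ← Matrix.mulVec_transpose, Matrix.mulVec_mulVec, h,
      Matrix.one_mulVec]
  have h1 := real_inner_self_eq_norm_sq (Matrix.toEuclideanLin O x)
  have h2 := real_inner_self_eq_norm_sq x
  nlinarith [norm_nonneg (Matrix.toEuclideanLin O x), norm_nonneg x]

/-- The intertwining relation `(I_N ⊗ A) U = U A_ō`. -/
lemma kron_intertwine {N n : ℕ} {ν : Fin N → ℕ} (A : Matrix (Fin n) (Fin n) ℝ)
    (U : ∀ i, Matrix (Fin n) (Fin (ν i)) ℝ)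
    (Aob : ∀ i, Matrix (Fin (ν i)) (Fin (ν i)) ℝ)
    (hintw : ∀ i, A * U i = U i * Aob i) :
    ((1 : Matrix (Fin N) (Fin N) ℝ) ⊗ₖ A) * blockDiagU U
      = blockDiagU U * Matrix.blockDiagonal' Aob := by
  ext ⟨p1, p2⟩ ⟨q1, q2⟩
  simp only [mul_apply, kroneckerMap_apply, blockDiagU, Matrix.of_apply,
    Fintype.sum_prod_type, one_apply]
  rw [Fintype.sum_eq_single p1 (fun j hj => Finset.sum_eq_zero fun k _ => by
    simp [if_neg (Ne.symm hj)])]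
  simp only [if_pos rfl, one_mul]
  rw [← Finset.univ_sigma_univ, Finset.sum_sigma]
  rw [Fintype.sum_eq_single q1 (fun j hj => Finset.sum_eq_zero fun k _ => by
    rw [blockDiagonal'_apply_ne _ _ _ hj, mul_zero])]
  by_cases hpq : p1 = q1
  · subst hpq
    simp only [if_pos rfl, blockDiagonal'_apply_eq]
    have := congrFun (congrFun (hintw p1) p2) q2
    simpa [mul_apply] using this
  · simp [hpq, if_neg (Ne.symm hpq)]

/-- `toEuclideanLin` is multiplicative (as application). -/
lemma toEuclideanLin_mul_apply {ι : Type*} [Fintype ι] [DecidableEq ι]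
    (M P : Matrix ι ι ℝ) (y : EuclideanSpace ℝ ι) :
    Matrix.toEuclideanLin (M * P) y = Matrix.toEuclideanLin M (Matrix.toEuclideanLin P y) := by
  simp [Matrix.toEuclideanLin_apply, Matrix.mulVec_mulVec]

/-- If the transformed system `η̇ = -Γ Uᵀ(L_{σ(t)} ⊗ I_n)U η` is exponentially stable, then
so is `ζ̇ = (A_ō - Γ Uᵀ(L_{σ(t)} ⊗ I_n)U) ζ`, where `A_ō = blockdiag(A_{1ō},…,A_{Nō})` with
each `A_{iō}` skew-symmetric, `Γ = blockdiag(γ₁I,…,γ_N I)` with `γᵢ > 0`, `A` is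
skew-symmetric and `A Uᵢ = Uᵢ A_{iō}` (so that `η(t) = e^{-A_ō t} ζ(t)` is norm-preserving
and obeys the transformed dynamics). -/
theorem zeta_system_exponentially_stable
    {N n n₀ : ℕ} {ν : Fin N → ℕ}
    (A : Matrix (Fin n) (Fin n) ℝ) (hA : Aᵀ = -A)
    (U : ∀ i, Matrix (Fin n) (Fin (ν i)) ℝ)
    (Aob : ∀ i, Matrix (Fin (ν i)) (Fin (ν i)) ℝ)
    (hAob : ∀ i, (Aob i)ᵀ = -(Aob i))
    (hintw : ∀ i, A * U i = U i * Aob i)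
    (γ : Fin N → ℝ) (hγ : ∀ i, 0 < γ i)
    (Lap : Fin n₀ → Matrix (Fin N) (Fin N) ℝ)
    (hLap : ∀ p, (Lap p).PosSemidef)
    (σ : ℝ → Fin n₀)
    (hη : ExpStable (fun t =>
      -(Matrix.blockDiagonal' (fun i => γ i • (1 : Matrix (Fin (ν i)) (Fin (ν i)) ℝ)) *
        ((blockDiagU U)ᵀ * (Lap (σ t) ⊗ₖ (1 : Matrix (Fin n) (Fin n) ℝ)) * blockDiagU U)))) :
    ExpStable (fun t =>
      Matrix.blockDiagonal' Aob -
      Matrix.blockDiagonal' (fun i => γ i • (1 : Matrix (Fin (ν i)) (Fin (ν i)) ℝ)) *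
        ((blockDiagU U)ᵀ * (Lap (σ t) ⊗ₖ (1 : Matrix (Fin n) (Fin n) ℝ)) * blockDiagU U)) := by
  classical
  set Ao : Matrix ((i : Fin N) × Fin (ν i)) ((i : Fin N) × Fin (ν i)) ℝ :=
    Matrix.blockDiagonal' Aob with hAo
  set G : Matrix ((i : Fin N) × Fin (ν i)) ((i : Fin N) × Fin (ν i)) ℝ :=
    Matrix.blockDiagonal' (fun i => γ i • (1 : Matrix (Fin (ν i)) (Fin (ν i)) ℝ)) with hG
  set Uu := blockDiagU U with hUu
  set W : Matrix (Fin N × Fin n) (Fin N × Fin n) ℝ := (1 : Matrix (Fin N) (Fin N) ℝ) ⊗ₖ A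
    with hW
  set B : ℝ → Matrix ((i : Fin N) × Fin (ν i)) ((i : Fin N) × Fin (ν i)) ℝ := fun t =>
    G * (Uuᵀ * (Lap (σ t) ⊗ₖ (1 : Matrix (Fin n) (Fin n) ℝ)) * Uu) with hB
  -- transpose of Ao
  have hAoT : Aoᵀ = -Ao := by
    rw [hAo, Matrix.blockDiagonal'_transpose]
    rw [show (fun k => (Aob k)ᵀ) = fun k => -(Aob k) from funext hAob]
    exact Matrix.blockDiagonal'_neg _
  -- intertwining
  have h1 : W * Uu = Uu * Ao := kron_intertwine A U Aob hintw
  have hWT : Wᵀ = -W := by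
    rw [hW]
    ext ⟨a, b⟩ ⟨c, d⟩
    have hAe : A d b = -A b d := by
      have := Matrix.transpose_apply A b d
      rw [hA] at this
      simpa using this.symm
    by_cases hac : a = c <;>
      simp [Matrix.transpose_apply, Matrix.kroneckerMap_apply, Matrix.one_apply, hAe, hac,
        eq_comm]
  have h1T : Uuᵀ * W = Ao * Uuᵀ := by
    have h2 := congrArg Matrix.transpose h1
    rw [Matrix.transpose_mul, Matrix.transpose_mul, hAoT, hWT] at h2
    -- h2 : Uuᵀ * -W = -Ao * Uuᵀ
    rw [Matrix.mul_neg, Matrix.neg_mul] at h2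
    exact neg_injective h2
  -- commutation of Ao with B t
  have hcommB : ∀ t, Commute Ao (B t) := by
    intro t
    set K : Matrix (Fin N × Fin n) (Fin N × Fin n) ℝ :=
      Lap (σ t) ⊗ₖ (1 : Matrix (Fin n) (Fin n) ℝ) with hK
    have hWK : W * K = K * W := by
      rw [hW, hK, ← Matrix.mul_kronecker_mul, ← Matrix.mul_kronecker_mul,
        Matrix.one_mul, Matrix.mul_one, Matrix.one_mul, Matrix.mul_one]
    have hS : Ao * (Uuᵀ * K * Uu) = (Uuᵀ * K * Uu) * Ao := by
      calc Ao * (Uuᵀ * K * Uu) = Ao * Uuᵀ * K * Uu := by simp only [Matrix.mul_assoc]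
        _ = Uuᵀ * W * K * Uu := by rw [← h1T]
        _ = Uuᵀ * (W * K) * Uu := by simp only [Matrix.mul_assoc]
        _ = Uuᵀ * (K * W) * Uu := by rw [hWK]
        _ = Uuᵀ * K * (W * Uu) := by simp only [Matrix.mul_assoc]
        _ = Uuᵀ * K * (Uu * Ao) := by rw [h1]
        _ = (Uuᵀ * K * Uu) * Ao := by simp only [Matrix.mul_assoc]
    have hGA : G * Ao = Ao * G := by
      have hpt : (fun k => γ k • (1 : Matrix (Fin (ν k)) (Fin (ν k)) ℝ) * Aob k)
          = fun k => Aob k * (γ k • (1 : Matrix (Fin (ν k)) (Fin (ν k)) ℝ)) := by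
        funext i
        rw [smul_mul_assoc, Matrix.one_mul, mul_smul_comm, Matrix.mul_one]
      rw [hG, hAo, ← Matrix.blockDiagonal'_mul, ← Matrix.blockDiagonal'_mul, hpt]
    show Ao * B t = B t * Ao
    rw [hB]
    calc Ao * (G * (Uuᵀ * K * Uu)) = Ao * G * (Uuᵀ * K * Uu) := by
          simp only [Matrix.mul_assoc]
      _ = G * Ao * (Uuᵀ * K * Uu) := by rw [hGA]
      _ = G * (Ao * (Uuᵀ * K * Uu)) := by simp only [Matrix.mul_assoc]
      _ = G * ((Uuᵀ * K * Uu) * Ao) := by rw [hS]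
      _ = G * (Uuᵀ * K * Uu) * Ao := by simp only [Matrix.mul_assoc]
  -- set up the matrix normed algebra
  letI : SeminormedRing (Matrix ((i : Fin N) × Fin (ν i)) ((i : Fin N) × Fin (ν i)) ℝ) :=
    Matrix.linftyOpSemiNormedRing
  letI : NormedRing (Matrix ((i : Fin N) × Fin (ν i)) ((i : Fin N) × Fin (ν i)) ℝ) :=
    Matrix.linftyOpNormedRing
  letI : NormedAlgebra ℝ (Matrix ((i : Fin N) × Fin (ν i)) ((i : Fin N) × Fin (ν i)) ℝ) :=
    Matrix.linftyOpNormedAlgebra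
  set E : ℝ → Matrix ((i : Fin N) × Fin (ν i)) ((i : Fin N) × Fin (ν i)) ℝ := fun s =>
    NormedSpace.exp (s • (-Ao)) with hE
  have horth : ∀ s, (E s)ᵀ * E s = 1 := by
    intro s
    have hT : (E s)ᵀ = NormedSpace.exp (-(s • (-Ao))) := by
      rw [hE, ← Matrix.exp_transpose]
      congr 1
      rw [Matrix.transpose_smul, Matrix.transpose_neg, hAoT]
      simp
    rw [hT, ← Matrix.exp_add_of_commute _ _ ((Commute.refl (s • (-Ao))).neg_left),
      neg_add_cancel, NormedSpace.exp_zero]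
  have hnorm : ∀ s (y : EuclideanSpace ℝ ((i : Fin N) × Fin (ν i))),
      ‖Matrix.toEuclideanLin (E s) y‖ = ‖y‖ :=
    fun s y => norm_toEuclideanLin_of_orth _ (horth s) y
  -- continuous linear map version of toEuclideanLin
  let L1 : Matrix ((i : Fin N) × Fin (ν i)) ((i : Fin N) × Fin (ν i)) ℝ →ₗ[ℝ]
      (EuclideanSpace ℝ ((i : Fin N) × Fin (ν i)) →L[ℝ]
        EuclideanSpace ℝ ((i : Fin N) × Fin (ν i))) :=
    (LinearMap.toContinuousLinearMap.toLinearMap).comp Matrix.toEuclideanLin.toLinearMap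
  let Gc := LinearMap.toContinuousLinearMap L1
  have hGc : ∀ M (y : EuclideanSpace ℝ ((i : Fin N) × Fin (ν i))),
      Gc M y = Matrix.toEuclideanLin M y := fun _ _ => rfl
  obtain ⟨c, lam, hc, hlam, hbound⟩ := hη
  refine ⟨c, lam, hc, hlam, ?_⟩
  intro ζ hζ t₀ t ht₀ htt
  set η : ℝ → EuclideanSpace ℝ ((i : Fin N) × Fin (ν i)) := fun s =>
    Matrix.toEuclideanLin (E s) (ζ s) with hη'
  have hηd : ∀ s, HasDerivAt η (Matrix.toEuclideanLin (-(B s)) (η s)) s := by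
    intro s
    have hEd : HasDerivAt (fun u : ℝ => NormedSpace.exp (u • (-Ao))) (E s * (-Ao)) s :=
      hasDerivAt_exp_smul_const (-Ao) s
    have hc1 : HasDerivAt (fun u => Gc (E u)) (Gc (E s * (-Ao))) s :=
      Gc.hasFDerivAt.comp_hasDerivAt s hEd
    have happ := hc1.clm_apply (hζ s)
    have hEB : Commute (E s) (B s) :=
      (((hcommB s).neg_left).smul_left s).exp_left
    have hfun : (fun u => Gc (E u) (ζ u)) = η := by
      funext u; rw [hGc, hη']
    have hder : Gc (E s * -Ao) (ζ s) + Gc (E s)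
        (Matrix.toEuclideanLin (Ao - B s) (ζ s)) =
        Matrix.toEuclideanLin (-(B s)) (η s) := by
      rw [hGc, hGc, ← toEuclideanLin_mul_apply (E s) (Ao - B s) (ζ s)]
      have : Matrix.toEuclideanLin (E s * -Ao) (ζ s) +
          Matrix.toEuclideanLin (E s * (Ao - B s)) (ζ s) =
          Matrix.toEuclideanLin (E s * -Ao + E s * (Ao - B s)) (ζ s) := by
        rw [map_add]; rfl
      rw [this]
      have hmat : E s * -Ao + E s * (Ao - B s) = -(B s) * E s := by
        rw [← Matrix.mul_add]
        have : -Ao + (Ao - B s) = -(B s) := by abel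
        rw [this, Matrix.mul_neg, hEB.eq, Matrix.neg_mul]
      rw [hmat, toEuclideanLin_mul_apply]
    rw [← hder]
    rw [hfun] at happ
    exact happ
  have hb := hbound η hηd t₀ t ht₀ htt
  rw [hη'] at hb
  rwa [hnorm t (ζ t), hnorm t₀ (ζ t₀)] at hb
end

section
/- With T_i = [D_i U_i] orthogonal, L_i = T_i col(L_{io}, 0), M_i = T_i diag(0, I_{ν_i}) T_iᵀ, and the decomposition T_iᵀAT_i = diag(A_{io}, A_{iō}), C_iT_i = [C_{io} 0], the coordinates ξ_{io} = D_iᵀe_i, ξ_{iō} = U_iᵀe_i transform the error dynamics ė_i = (A - L_iC_i)e_i - γ_iM_iΣ_j l_{ij}e_j into the triangular form ξ̇_{io} = (A_{io} - L_{io}C_{io})ξ_{io} and ξ̇_{iō} = A_{iō}ξ_{iō} - γ_iU_iᵀΣ_j l_{ij}(D_jξ_{jo} + U_jξ_{jō}). -/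
open Matrix

lemma mulVec_hasDerivAt {n p : ℕ} (M : Matrix (Fin p) (Fin n) ℝ)
    {f : ℝ → Fin n → ℝ} {f' : Fin n → ℝ} {t : ℝ} (hf : HasDerivAt f f' t) :
    HasDerivAt (fun s => M.mulVec (f s)) (M.mulVec f') t := by
  have := ((Matrix.mulVecLin M).toContinuousLinearMap.hasFDerivAt
    (x := f t)).comp_hasDerivAt t hf
  simpa [Function.comp_def] using this

/-- With `Tᵢ = [Dᵢ Uᵢ]` orthogonal, `Lᵢ = Dᵢ L_{io}`, `Mᵢ = UᵢUᵢᵀ`, and the decomposition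
`DᵢᵀAUᵢ = 0`, `UᵢᵀADᵢ = 0`, `CᵢUᵢ = 0`, the coordinates `ξ_{io} = Dᵢᵀeᵢ`, `ξ_{iō} = Uᵢᵀeᵢ`
transform the error dynamics `ėᵢ = (A - LᵢCᵢ)eᵢ - γᵢMᵢ Σⱼ lᵢⱼ eⱼ` into the triangular
form `ξ̇_{io} = (A_{io} - L_{io}C_{io})ξ_{io}` and
`ξ̇_{iō} = A_{iō}ξ_{iō} - γᵢUᵢᵀ Σⱼ lᵢⱼ (Dⱼξ_{jo} + Uⱼξ_{jō})`, where
`A_{io} = DᵢᵀADᵢ`, `A_{iō} = UᵢᵀAUᵢ`, `C_{io} = CᵢDᵢ`. -/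
theorem error_dynamics_triangular_form
    {N n : ℕ} {m μ ν : Fin N → ℕ}
    (A : Matrix (Fin n) (Fin n) ℝ)
    (C : ∀ i, Matrix (Fin (m i)) (Fin n) ℝ)
    (D : ∀ i, Matrix (Fin n) (Fin (μ i)) ℝ)
    (U : ∀ i, Matrix (Fin n) (Fin (ν i)) ℝ)
    (hD : ∀ i, (D i)ᵀ * D i = 1)
    (hU : ∀ i, (U i)ᵀ * U i = 1)
    (hDU : ∀ i, (D i)ᵀ * U i = 0)
    (hcomplete : ∀ i, D i * (D i)ᵀ + U i * (U i)ᵀ = 1)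
    (hblock₁ : ∀ i, (D i)ᵀ * A * U i = 0)
    (hblock₂ : ∀ i, (U i)ᵀ * A * D i = 0)
    (hCU : ∀ i, C i * U i = 0)
    (Lio : ∀ i, Matrix (Fin (μ i)) (Fin (m i)) ℝ)
    (γ : Fin N → ℝ)
    (l : ℝ → Fin N → Fin N → ℝ)
    (e : Fin N → ℝ → Fin n → ℝ)
    (he : ∀ i t, HasDerivAt (e i)
      ((A - (D i * Lio i) * C i).mulVec (e i t) -
        γ i • ((U i * (U i)ᵀ).mulVec (∑ j, l t i j • e j t))) t) :
    ∀ i t,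
      HasDerivAt (fun s => (D i)ᵀ.mulVec (e i s))
        (((D i)ᵀ * A * D i - Lio i * (C i * D i)).mulVec ((D i)ᵀ.mulVec (e i t))) t ∧
      HasDerivAt (fun s => (U i)ᵀ.mulVec (e i s))
        (((U i)ᵀ * A * U i).mulVec ((U i)ᵀ.mulVec (e i t)) -
          γ i • (U i)ᵀ.mulVec (∑ j, l t i j •
            ((D j).mulVec ((D j)ᵀ.mulVec (e j t)) +
              (U j).mulVec ((U j)ᵀ.mulVec (e j t))))) t := by
  intro i t
  have hUD : (U i)ᵀ * D i = 0 := by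
    have := congrArg Matrix.transpose (hDU i)
    simpa [Matrix.transpose_mul] using this
  have hdec : ∀ j (v : Fin n → ℝ),
      (D j).mulVec ((D j)ᵀ.mulVec v) + (U j).mulVec ((U j)ᵀ.mulVec v) = v := by
    intro j v
    have := congrArg (fun M : Matrix (Fin n) (Fin n) ℝ => M.mulVec v) (hcomplete j)
    simpa [Matrix.add_mulVec, Matrix.mulVec_mulVec] using this
  have hDA : (D i)ᵀ * A * (D i * (D i)ᵀ) = (D i)ᵀ * A := by
    have h1 : (D i)ᵀ * A * (D i * (D i)ᵀ) + (D i)ᵀ * A * (U i * (U i)ᵀ) = (D i)ᵀ * A := by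
      rw [← Matrix.mul_add, hcomplete i, Matrix.mul_one]
    have h2 : (D i)ᵀ * A * (U i * (U i)ᵀ) = 0 := by
      rw [← Matrix.mul_assoc, hblock₁ i, Matrix.zero_mul]
    rw [h2, add_zero] at h1; exact h1
  have hUA : (U i)ᵀ * A * (U i * (U i)ᵀ) = (U i)ᵀ * A := by
    have h1 : (U i)ᵀ * A * (D i * (D i)ᵀ) + (U i)ᵀ * A * (U i * (U i)ᵀ) = (U i)ᵀ * A := by
      rw [← Matrix.mul_add, hcomplete i, Matrix.mul_one]
    have h2 : (U i)ᵀ * A * (D i * (D i)ᵀ) = 0 := by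
      rw [← Matrix.mul_assoc, hblock₂ i, Matrix.zero_mul]
    rw [h2, zero_add] at h1; exact h1
  have hCD : C i * (D i * (D i)ᵀ) = C i := by
    have h1 : C i * (D i * (D i)ᵀ) + C i * (U i * (U i)ᵀ) = C i := by
      rw [← Matrix.mul_add, hcomplete i, Matrix.mul_one]
    have h2 : C i * (U i * (U i)ᵀ) = 0 := by
      rw [← Matrix.mul_assoc, hCU i, Matrix.zero_mul]
    rw [h2, add_zero] at h1; exact h1
  have key1 : ((D i)ᵀ * A * D i - Lio i * (C i * D i)) * (D i)ᵀ
      = (D i)ᵀ * (A - (D i * Lio i) * C i) := by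
    rw [Matrix.sub_mul, Matrix.mul_sub]
    congr 1
    · rw [Matrix.mul_assoc ((D i)ᵀ * A), hDA]
    · rw [Matrix.mul_assoc (Lio i), Matrix.mul_assoc (C i), hCD, ← Matrix.mul_assoc,
        ← Matrix.mul_assoc, hD i, Matrix.one_mul]
  have key2 : (U i)ᵀ * (A - (D i * Lio i) * C i) = (U i)ᵀ * A * U i * (U i)ᵀ := by
    rw [Matrix.mul_assoc ((U i)ᵀ * A), hUA, Matrix.mul_sub]
    have h2 : (U i)ᵀ * (D i * Lio i * C i) = 0 := by
      rw [← Matrix.mul_assoc, ← Matrix.mul_assoc, hUD, Matrix.zero_mul, Matrix.zero_mul]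
    rw [h2, sub_zero]
  have hUUU : (U i)ᵀ * (U i * (U i)ᵀ) = (U i)ᵀ := by
    rw [← Matrix.mul_assoc, hU i, Matrix.one_mul]
  have hDUU : (D i)ᵀ * (U i * (U i)ᵀ) = 0 := by
    rw [← Matrix.mul_assoc, hDU i, Matrix.zero_mul]
  constructor
  · have h := mulVec_hasDerivAt (D i)ᵀ (he i t)
    convert h using 1
    rw [Matrix.mulVec_sub, Matrix.mulVec_smul]
    simp only [Matrix.mulVec_mulVec]
    rw [key1, hDUU, Matrix.zero_mulVec, smul_zero, sub_zero]
  · have h := mulVec_hasDerivAt (U i)ᵀ (he i t)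
    convert h using 1
    rw [Matrix.mulVec_sub, Matrix.mulVec_smul]
    simp only [Matrix.mulVec_mulVec]
    rw [key2, hUUU]
    have hsum : ∑ j, l t i j • ((D j * (D j)ᵀ) *ᵥ e j t + (U j * (U j)ᵀ) *ᵥ e j t)
        = ∑ j, l t i j • e j t := by
      refine Finset.sum_congr rfl fun j _ => ?_
      rw [← Matrix.mulVec_mulVec, ← Matrix.mulVec_mulVec, hdec j]
    rw [hsum]
end
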